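/- Let n ≥ 2 and let x ∈ ℝ^{n+1} with 0 < |x| < 1 and |x|² ≠ x_{n+1}, and write (y, t) = Ψ₁(x) = ( x*/(|x|² − x_{n+1}) , |x|√(1 − |x|²)/||x|² − x_{n+1}| ) where x* = (x₁, …, x_n). If |x − e_{n+1}/2| < 1/2 (x lies inside the sphere S₀) then t² − |y|² > 1, while if |x − e_{n+1}/2| > 1/2 (x lies outside S₀, inside the unit ball) then t² − |y|² < 1. Thus Ψ₁ maps the interior of S₀ into the region above the upper hyperboloid t² − |y|² = 1, t > 0, and the exterior of S₀ in the unit ball into the region below it. -/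

import Mathlib

/-- The center part `y = x*/(|x|² − x_{n+1}) ∈ ℝⁿ` of `Ψ₁(x)`. -/
noncomputable def Psi1Center (n : ℕ) (x : EuclideanSpace ℝ (Fin (n + 1))) :
    EuclideanSpace ℝ (Fin n) :=
  WithLp.toLp 2 (fun i => x i.castSucc / (‖x‖ ^ 2 - x (Fin.last n)))

/-- The radius part `t = |x|√(1 − |x|²)/||x|² − x_{n+1}|` of `Ψ₁(x)`. -/
noncomputable def Psi1Radius (n : ℕ) (x : EuclideanSpace ℝ (Fin (n + 1))) : ℝ :=
  ‖x‖ * Real.sqrt (1 - ‖x‖ ^ 2) / |‖x‖ ^ 2 - x (Fin.last n)|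

/-- The north pole `e_{n+1} = (0, …, 0, 1)`. -/
noncomputable def northPole (n : ℕ) : EuclideanSpace ℝ (Fin (n + 1)) :=
  EuclideanSpace.single (Fin.last n) 1

/-- `Ψ₁` maps the interior of the sphere `S₀` (center `e_{n+1}/2`, radius `1/2`) into the
region above the upper hyperboloid `t² − |y|² = 1`, `t > 0`, and the exterior of `S₀` inside
the unit ball into the region below it. -/
theorem stmt11 (n : ℕ) (hn : 2 ≤ n) (x : EuclideanSpace ℝ (Fin (n + 1)))
    (hx0 : 0 < ‖x‖) (hx1 : ‖x‖ < 1) (hxS : ‖x‖ ^ 2 ≠ x (Fin.last n)) :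
    (‖x - (1 / 2 : ℝ) • northPole n‖ < 1 / 2 →
      1 < Psi1Radius n x ^ 2 - ‖Psi1Center n x‖ ^ 2) ∧
    (1 / 2 < ‖x - (1 / 2 : ℝ) • northPole n‖ →
      Psi1Radius n x ^ 2 - ‖Psi1Center n x‖ ^ 2 < 1) := by
  have hd : ‖x‖ ^ 2 - x (Fin.last n) ≠ 0 := sub_ne_zero.mpr hxS
  have hd2 : 0 < (‖x‖ ^ 2 - x (Fin.last n)) ^ 2 := by positivity
  -- norm squared as sum
  have hnx : ‖x‖ ^ 2 = ∑ i : Fin (n+1), x i ^ 2 := by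
    rw [EuclideanSpace.norm_eq, Real.sq_sqrt (by positivity)]
    simp [sq_abs]
  have hsum : ∑ i : Fin n, x i.castSucc ^ 2 = ‖x‖ ^ 2 - x (Fin.last n) ^ 2 := by
    rw [hnx, Fin.sum_univ_castSucc]; ring
  -- center norm squared
  have hC : ‖Psi1Center n x‖ ^ 2
      = (‖x‖ ^ 2 - x (Fin.last n) ^ 2) / (‖x‖ ^ 2 - x (Fin.last n)) ^ 2 := by
    rw [EuclideanSpace.norm_eq, Real.sq_sqrt (by positivity)]
    simp only [Psi1Center, PiLp.toLp_apply, Real.norm_eq_abs, sq_abs, div_pow]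
    rw [← Finset.sum_div, hsum]
  -- radius squared
  have hR : Psi1Radius n x ^ 2
      = ‖x‖ ^ 2 * (1 - ‖x‖ ^ 2) / (‖x‖ ^ 2 - x (Fin.last n)) ^ 2 := by
    rw [Psi1Radius, div_pow, mul_pow, Real.sq_sqrt (by nlinarith), sq_abs]
  have key : Psi1Radius n x ^ 2 - ‖Psi1Center n x‖ ^ 2
      = (x (Fin.last n) ^ 2 - ‖x‖ ^ 4) / (‖x‖ ^ 2 - x (Fin.last n)) ^ 2 := by
    rw [hR, hC]; field_simp; ring
  -- sphere membership
  have hS : ‖x - (1 / 2 : ℝ) • northPole n‖ ^ 2 = ‖x‖ ^ 2 - x (Fin.last n) + 1/4 := by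
    rw [norm_sub_sq_real, northPole, real_inner_smul_right, norm_smul]
    have h1 : (inner ℝ x (EuclideanSpace.single (Fin.last n) (1:ℝ)) : ℝ) = x (Fin.last n) := by
      rw [EuclideanSpace.inner_single_right]; simp
    rw [h1]
    simp only [EuclideanSpace.norm_single, norm_one, Real.norm_eq_abs]
    rw [abs_of_nonneg (by norm_num : (0:ℝ) ≤ 1/2)]
    ring
  have hx2 : 0 < ‖x‖ ^ 2 := by positivity
  constructor
  · intro h
    have h2 : ‖x - (1 / 2 : ℝ) • northPole n‖ ^ 2 < (1/2)^2 :=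
      pow_lt_pow_left₀ h (norm_nonneg _) (by norm_num)
    rw [hS] at h2
    have hlt : ‖x‖ ^ 2 < x (Fin.last n) := by nlinarith
    rw [key, lt_div_iff₀ hd2]
    nlinarith
  · intro h
    have h2 : (1/2:ℝ)^2 < ‖x - (1 / 2 : ℝ) • northPole n‖ ^ 2 :=
      pow_lt_pow_left₀ h (by norm_num) (by norm_num)
    rw [hS] at h2
    have hlt : x (Fin.last n) < ‖x‖ ^ 2 := by nlinarith
    rw [key, div_lt_iff₀ hd2]
    nlinarith
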